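/- Given distinct points x_0,…,x_n ∈ ℂ with n ≥ 2, and 2 ≤ ℓ ≤ n−2, one has Σ_{k=ℓ}^{n−2} D_ℓ^k(P_2^k)·D_k^k(P_{k+1}^{k+1})·D_k^{n−1}(P_{k+2}^n) + D_ℓ^{n−1}(P_2^{n−1})·D_{n−1}^{n−1}(P_n^n) = D_ℓ^{n−1}(P_2^n). -/

import Mathlib

/-- Auxiliary: divided difference over points `x m, …, x (m+g)`. -/
noncomputable def ddAux (x : ℕ → ℂ) (f : ℂ → ℂ) : ℕ → ℕ → ℂ
  | 0, m => f (x m)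
  | g + 1, m => (ddAux x f g m - ddAux x f g (m + 1)) / (x m - x (m + (g + 1)))

/-- Newton divided difference `[x_m, …, x_j] f`. -/
noncomputable def dd (x : ℕ → ℂ) (f : ℂ → ℂ) (m j : ℕ) : ℂ := ddAux x f (j - m) m

/-- Modified divided difference `⟨x_m, …, x_j⟩ f`. -/
noncomputable def mdd (x : ℕ → ℂ) (f : ℂ → ℂ) (m j : ℕ) : ℂ :=
  if m < j then
    (x m + x (m + 1)) *
      dd x (fun z => f z * ∏ k ∈ Finset.Icc (m + 2) j, (x k + z)) m j
  else f (x j)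

lemma ddAux_zero (x : ℕ → ℂ) (f : ℂ → ℂ) (m : ℕ) : ddAux x f 0 m = f (x m) := rfl

lemma ddAux_succ (x : ℕ → ℂ) (f : ℂ → ℂ) (g m : ℕ) :
    ddAux x f (g + 1) m = (ddAux x f g m - ddAux x f g (m + 1)) / (x m - x (m + (g + 1))) := rfl

lemma ddAux_linear (x : ℕ → ℂ) (f : ℂ → ℂ) (c : ℂ) :
    ∀ g m, (∀ i j, m ≤ i → i < j → j ≤ m + (g + 1) → x i ≠ x j) →
    ddAux x (fun z => f z * (c + z)) (g + 1) m
      = (c + x (m + (g + 1))) * ddAux x f (g + 1) m + ddAux x f g m := by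
  intro g
  induction g with
  | zero =>
    intro m hd
    have h : x m ≠ x (m + 1) := hd m (m + 1) le_rfl (by omega) (by omega)
    have h' : x m - x (m + 1) ≠ 0 := sub_ne_zero.mpr h
    simp only [ddAux_succ, ddAux_zero]
    field_simp
    ring
  | succ g ih =>
    intro m hd
    have hq : x m ≠ x (m + (g + 1)) := hd m (m + (g + 1)) le_rfl (by omega) (by omega)
    have hr : x m ≠ x (m + (g + 2)) := hd m (m + (g + 2)) le_rfl (by omega) (by omega)
    have hq' : x m - x (m + (g + 1)) ≠ 0 := sub_ne_zero.mpr hq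
    have hr' : x m - x (m + (g + 2)) ≠ 0 := sub_ne_zero.mpr hr
    have ih1 := ih m (fun i j h1 h2 h3 => hd i j h1 h2 (by omega))
    have ih2 := ih (m + 1) (fun i j h1 h2 h3 => hd i j (by omega) h2 (by omega))
    have e1 : m + 1 + (g + 1) = m + (g + 2) := by omega
    rw [e1] at ih2
    have e2 : m + (g + 1 + 1) = m + (g + 2) := by omega
    rw [ddAux_succ x (fun z => f z * (c + z)) (g + 1) m, ih1, ih2]
    rw [e2]
    have hB : ddAux x f (g + 1 + 1) m * (x m - x (m + (g + 2)))
        = ddAux x f (g + 1) m - ddAux x f (g + 1) (m + 1) := by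
      rw [ddAux_succ, e2]; field_simp
    have hA : ddAux x f (g + 1) m * (x m - x (m + (g + 1))) = ddAux x f g m - ddAux x f g (m + 1) := by
      rw [ddAux_succ]; field_simp
    field_simp
    linear_combination (-(c + x (m + (g + 2)))) * hB - hA

lemma ddAux_const (x : ℕ → ℂ) (c : ℂ) : ∀ g m, ddAux x (fun _ => c) g m = if g = 0 then c else 0 := by
  intro g
  induction g with
  | zero => intro m; simp [ddAux_zero]
  | succ g ih => intro m; simp [ddAux_succ, ih]

lemma ddAux_monic (x : ℕ → ℂ) :
    ∀ e a b g m, 1 ≤ a → b + 1 - a = e → e ≤ g →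
    (∀ i j, m ≤ i → i < j → j ≤ m + g → x i ≠ x j) →
    ddAux x (fun z => ∏ k ∈ Finset.Icc a b, (x k + z)) g m = if e = g then 1 else 0 := by
  intro e
  induction e with
  | zero =>
    intro a b g m ha he hle hd
    have hab : b < a := by omega
    have : Finset.Icc a b = ∅ := Finset.Icc_eq_empty (by omega)
    simp only [this, Finset.prod_empty]
    rw [ddAux_const]
    by_cases hg : g = 0
    · simp [hg]
    · simp [hg, show (0 : ℕ) ≠ g from fun h => hg h.symm]
  | succ e ih =>
    intro a b g m ha he hle hd
    have hab : a ≤ b := by omega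
    obtain ⟨b', rfl⟩ : ∃ b', b = b' + 1 := ⟨b - 1, by omega⟩
    obtain ⟨g', rfl⟩ : ∃ g', g = g' + 1 := ⟨g - 1, by omega⟩
    have hprod : (fun z => ∏ k ∈ Finset.Icc a (b' + 1), (x k + z))
        = fun z => (∏ k ∈ Finset.Icc a b', (x k + z)) * (x (b' + 1) + z) := by
      funext z
      exact Finset.prod_Icc_succ_top (by omega) _
    rw [hprod, ddAux_linear x _ _ g' m hd]
    rw [ih a b' (g' + 1) m ha (by omega) (by omega) hd]
    rw [ih a b' g' m ha (by omega) (by omega) (fun i j h1 h2 h3 => hd i j h1 h2 (by omega))]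
    have h1 : e ≠ g' + 1 := by omega
    have h2 : (e + 1 = g' + 1) = (e = g') := by
      apply propext; omega
    simp [h1, h2]

lemma tele (x : ℕ → ℂ) (n : ℕ)
    (hd : ∀ i j, i ≤ n → j ≤ n → i ≠ j → x i ≠ x j) (ℓ : ℕ) (hl : 2 ≤ ℓ) :
    ∀ m, ℓ ≤ m → m + 1 ≤ n →
    ∑ k ∈ Finset.Icc ℓ m, (x k + x (k + 1)) * dd x (fun z => ∏ j ∈ Finset.Icc 2 k, (x j + z)) ℓ k
      = dd x (fun z => ∏ j ∈ Finset.Icc 2 (m + 1), (x j + z)) ℓ m := by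
  intro m hlm
  induction m, hlm using Nat.le_induction with
  | base =>
    intro _
    rw [Finset.Icc_self, Finset.sum_singleton]
    simp only [dd, Nat.sub_self, ddAux_zero]
    rw [Finset.prod_Icc_succ_top (by omega : 2 ≤ ℓ + 1)]
    ring
  | succ m hm ih =>
    intro hmn
    rw [Finset.sum_Icc_succ_top (by omega : ℓ ≤ m + 1), ih (by omega)]
    have hprod : (fun z => ∏ j ∈ Finset.Icc 2 (m + 1 + 1), (x j + z))
        = fun z => (∏ j ∈ Finset.Icc 2 (m + 1), (x j + z)) * (x (m + 2) + z) := by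
      funext z
      exact Finset.prod_Icc_succ_top (by omega) _
    rw [hprod]
    simp only [dd]
    have h1 : m + 1 - ℓ = (m - ℓ) + 1 := by omega
    rw [h1, ddAux_linear x _ _ (m - ℓ) ℓ
      (fun i j hi hij hj => hd i j (by omega) (by omega) (by omega))]
    have h2 : ℓ + (m - ℓ + 1) = m + 1 := by omega
    rw [h2]
    ring

/-- First identity of the technical lemma for modified divided differences. -/
theorem dd_prod_identity_end (x : ℕ → ℂ) (n : ℕ) (hn : 2 ≤ n)
    (hdist : ∀ i j, i ≤ n → j ≤ n → i ≠ j → x i ≠ x j)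
    (P : ℕ → ℕ → ℂ → ℂ)
    (hP : ∀ m j z, P m j z = ∏ k ∈ Finset.Icc m j, (x k + z)) :
    ∀ ℓ, 2 ≤ ℓ → ℓ ≤ n - 2 →
      (∑ k ∈ Finset.Icc ℓ (n - 2),
          dd x (P 2 k) ℓ k * dd x (P (k + 1) (k + 1)) k k * dd x (P (k + 2) n) k (n - 1))
        + dd x (P 2 (n - 1)) ℓ (n - 1) * dd x (P n n) (n - 1) (n - 1)
      = dd x (P 2 n) ℓ (n - 1) := by
  obtain ⟨M, rfl⟩ : ∃ M, n = M + 2 := ⟨n - 2, by omega⟩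
  intro ℓ hl hlM
  have hlM' : ℓ ≤ M := by omega
  have hPf : ∀ m j, P m j = fun z => ∏ k ∈ Finset.Icc m j, (x k + z) :=
    fun m j => funext fun z => hP m j z
  simp only [hPf]
  have hsub1 : M + 2 - 2 = M := by omega
  have hsub2 : M + 2 - 1 = M + 1 := by omega
  rw [hsub1, hsub2]
  -- simplify each summand
  have hterm : ∀ k ∈ Finset.Icc ℓ M,
      dd x (fun z => ∏ j ∈ Finset.Icc 2 k, (x j + z)) ℓ k
        * dd x (fun z => ∏ j ∈ Finset.Icc (k + 1) (k + 1), (x j + z)) k k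
        * dd x (fun z => ∏ j ∈ Finset.Icc (k + 2) (M + 2), (x j + z)) k (M + 1)
      = (x k + x (k + 1)) * dd x (fun z => ∏ j ∈ Finset.Icc 2 k, (x j + z)) ℓ k := by
    intro k hk
    rw [Finset.mem_Icc] at hk
    have e1 : dd x (fun z => ∏ j ∈ Finset.Icc (k + 1) (k + 1), (x j + z)) k k
        = x (k + 1) + x k := by
      simp [dd, Nat.sub_self, ddAux_zero]
    have e2 : dd x (fun z => ∏ j ∈ Finset.Icc (k + 2) (M + 2), (x j + z)) k (M + 1) = 1 := by
      show ddAux x _ (M + 1 - k) k = 1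
      rw [ddAux_monic x (M + 1 - k) (k + 2) (M + 2) (M + 1 - k) k (by omega) (by omega) le_rfl
        (fun i j hi hij hj => hdist i j (by omega) (by omega) (by omega))]
      simp
    rw [e1, e2]
    ring
  rw [Finset.sum_congr rfl hterm]
  have e3 : dd x (fun z => ∏ j ∈ Finset.Icc (M + 2) (M + 2), (x j + z)) (M + 1) (M + 1)
      = x (M + 2) + x (M + 1) := by
    simp [dd, Nat.sub_self, ddAux_zero]
  rw [e3]
  have htele := tele x (M + 2) hdist ℓ hl (M + 1) (by omega) (by omega)
  rw [Finset.sum_Icc_succ_top (by omega : ℓ ≤ M + 1)] at htele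
  rw [← htele]
  ring
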